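/- Shuffle product formula: for any path map α on a digraph G and 1-forms ω_1,...,ω_{r+s}, the product of iterated integrals satisfies (∫_α ω_1···ω_r)(∫_α ω_{r+1}···ω_{r+s}) = Σ_σ ∫_α ω_{σ(1)}···ω_{σ(r+s)}, where σ ranges over all (r,s)-shuffles. -/

import Mathlib

open Finset

attribute [local instance] Classical.propDecidable

/-- A digraph: vertex type `V`, arrow relation without self-loops. -/
structure Digraph' (V : Type*) where
  Arrow : V → V → Prop
  irrefl : ∀ v, ¬ Arrow v v

/-- A step of a path map: an arrow `a → b` traversed forward, an arrow `a → b`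
traversed backward (from `b` to `a`), or a trivial arrow at a vertex. -/
inductive PStep (V : Type*) where
  | fwd : V → V → PStep V
  | bwd : V → V → PStep V
  | triv : V → PStep V

namespace PStep
variable {V : Type*}

def src : PStep V → V
  | fwd a _ => a
  | bwd _ b => b
  | triv a => a

def tgt : PStep V → V
  | fwd _ b => b
  | bwd a _ => a
  | triv a => a

/-- The step uses an actual arrow of `G` (or is trivial). -/
def ok (G : Digraph' V) : PStep V → Prop
  | fwd a b => G.Arrow a b
  | bwd a b => G.Arrow a b
  | triv _ => True

/-- The inverse step. -/
def inv : PStep V → PStep V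
  | fwd a b => bwd a b
  | bwd a b => fwd a b
  | triv a => triv a

/-- Pairing `⟨ω, s⟩` of a 1-form with a step: `ω(a)` forward, `-ω(a)` backward,
`0` on trivial arrows. -/
def pair {K : Type*} [Field K] (ω : V → V → K) : PStep V → K
  | fwd a b => ω a b
  | bwd a b => - ω a b
  | triv _ => 0

end PStep

/-- `σ 1, …, σ n` are the steps of a path map `I_n → G`. -/
def IsPathMap {V : Type*} (G : Digraph' V) (n : ℕ) (σ : ℕ → PStep V) : Prop :=
  (∀ t, 1 ≤ t → t ≤ n → (σ t).ok G) ∧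
  (∀ t, 1 ≤ t → t < n → (σ t).tgt = (σ (t + 1)).src)

/-- Volume number of a finite sequence: product of factorials of multiplicities. -/
def volFin {r : ℕ} (g : Fin r → ℕ) : ℕ :=
  ∏ k ∈ Finset.image g Finset.univ,
    Nat.factorial ((Finset.univ.filter (fun j => g j = k)).card)

/-- The iterated integral `∫_α ω_1 ⋯ ω_r` along a path map of length `n`
with steps `σ 1, …, σ n`. -/
noncomputable def iint (K : Type*) [Field K] {V : Type*} (n : ℕ) (σ : ℕ → PStep V)
    (r : ℕ) (ω : Fin r → V → V → K) : K :=
  ∑ f ∈ Finset.univ.filter (fun f : Fin r → Fin n => Monotone f),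
    (∏ i, PStep.pair (ω i) (σ ((f i : ℕ) + 1))) / (volFin (fun i => (f i : ℕ)) : K)

/-- Concatenation of step sequences: the first `n` steps from `σ`, then steps of `τ`. -/
def concatP {V : Type*} (n : ℕ) (σ τ : ℕ → PStep V) : ℕ → PStep V :=
  fun t => if t ≤ n then σ t else τ (t - n)

/-- The inverse path map of a path map of length `n`. -/
def invP {V : Type*} (n : ℕ) (σ : ℕ → PStep V) : ℕ → PStep V :=
  fun t => (σ (n + 1 - t)).inv

/-- Multiplicity of the value `k` in the (1-indexed) sequence `t 1, …, t r`. -/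
def multN (t : ℕ → ℕ) (r k : ℕ) : ℕ := ((Finset.Icc 1 r).filter (fun j => t j = k)).card

/-- Volume number of the sequence `t 1, …, t r`: the product over all `k` of
the factorial of the multiplicity of `k`. -/
noncomputable def volN (t : ℕ → ℕ) (r : ℕ) : ℕ := ∏ᶠ k, Nat.factorial (multN t r k)

section Aux
open Equiv Finset

variable {n r s : ℕ}

lemma volFin_ne_zero {r : ℕ} (q : Fin r → ℕ) : volFin q ≠ 0 := by
  unfold volFin
  rw [Finset.prod_ne_zero_iff]
  exact fun k _ => Nat.factorial_ne_zero _

lemma volFin_coe_eq (f : Fin r → Fin n) :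
    volFin (fun i => (f i : ℕ)) = Fintype.card {ρ : Equiv.Perm (Fin r) // f ∘ ρ = f} := by
  have : Fintype.card {ρ : Equiv.Perm (Fin r) // f ∘ ρ = f}
      = Fintype.card {ρ : Equiv.Perm (Fin r) // (fun i => (f i : ℕ)) ∘ ρ = (fun i => (f i : ℕ))} := by
    apply Fintype.card_congr
    apply Equiv.subtypeEquivRight
    intro ρ
    constructor
    · intro h; funext i
      have := congrFun h i
      simp only [Function.comp_apply] at this ⊢
      exact congrArg Fin.val this
    · intro h; funext i
      have := congrFun h i
      simp only [Function.comp_apply] at this ⊢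
      exact Fin.val_injective this
  rw [this, DomMulAct.stabilizer_card']
  unfold volFin
  apply Finset.prod_congr rfl
  intro k _
  congr 1
  rw [Fintype.card_subtype]
end Aux
theorem Equiv.Perm.apply_inv_self {α : Type*} (f : Equiv.Perm α) (x : α) : f (f⁻¹ x) = x :=
  f.apply_symm_apply x

theorem Equiv.Perm.inv_apply_self {α : Type*} (f : Equiv.Perm α) (x : α) : f⁻¹ (f x) = x :=
  f.symm_apply_apply x

section Aux2
open Equiv Finset

variable {r s : ℕ}

/-- indicator of the "first block" pulled back through `π`. -/
def chi (r s : ℕ) (π : Equiv.Perm (Fin (r+s))) : Fin (r+s) → ℕ :=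
  fun x => if (π x : ℕ) < r then 0 else 1

lemma chi_apply (π : Equiv.Perm (Fin (r+s))) (x : Fin (r+s)) :
    chi r s π x = if (π x : ℕ) < r then 0 else 1 := rfl

def IsShuffle (r s : ℕ) (e : Equiv.Perm (Fin (r+s))) : Prop :=
  (∀ a b : Fin (r + s), (a : ℕ) < r → (b : ℕ) < r → a < b → e.symm a < e.symm b) ∧
  (∀ a b : Fin (r + s), r ≤ (a : ℕ) → r ≤ (b : ℕ) → a < b → e.symm a < e.symm b)

lemma key_lt (π : Equiv.Perm (Fin (r+s))) (j : Fin (r+s)) :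
    (j : ℕ) < r ↔ (π (Tuple.sort (chi r s π) j) : ℕ) < r := by
  have hmono := Tuple.monotone_sort (chi r s π)
  have hcard : Fintype.card {i : Fin (r+s) // (chi r s π ∘ Tuple.sort (chi r s π)) i ≤ 0} = r := by
    have e1 : {i : Fin (r+s) // (chi r s π ∘ Tuple.sort (chi r s π)) i ≤ 0}
        ≃ {x : Fin (r+s) // chi r s π x ≤ 0} :=
      Equiv.subtypeEquiv (Tuple.sort (chi r s π)) (fun a => Iff.rfl)
    have e2 : {x : Fin (r+s) // chi r s π x ≤ 0} ≃ {x : Fin (r+s) // (π x : ℕ) < r} := by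
      apply Equiv.subtypeEquivRight
      intro x
      rw [chi_apply]
      split_ifs with h <;> simp [h]
    have e3 : {x : Fin (r+s) // (π x : ℕ) < r} ≃ {y : Fin (r+s) // (y : ℕ) < r} :=
      Equiv.subtypeEquiv π (fun a => Iff.rfl)
    have e4 : {y : Fin (r+s) // (y : ℕ) < r} ≃ Fin r :=
      { toFun := fun y => ⟨(y.1 : ℕ), y.2⟩
        invFun := fun i => ⟨⟨(i : ℕ), lt_of_lt_of_le i.2 (Nat.le_add_right r s)⟩, i.2⟩
        left_inv := fun y => by ext; rfl
        right_inv := fun i => rfl }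
    rw [Fintype.card_congr (((e1.trans e2).trans e3).trans e4), Fintype.card_fin]
  have h := Tuple.lt_card_le_iff_apply_le_of_monotone
    (f := chi r s π ∘ Tuple.sort (chi r s π)) (a := 0) (j := j) hmono
  rw [← Fintype.card_subtype, hcard] at h
  rw [h, Function.comp_apply, chi_apply]
  split_ifs with hh <;> simp [hh]

/-- The standardization of a permutation to a shuffle with the same block indicator. -/
def stdSh (r s : ℕ) (π : Equiv.Perm (Fin (r+s))) : Equiv.Perm (Fin (r+s)) :=
  (Tuple.sort (chi r s π))⁻¹

lemma stdSh_lt_iff (π : Equiv.Perm (Fin (r+s))) (x : Fin (r+s)) :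
    ((stdSh r s π x : ℕ) < r) ↔ ((π x : ℕ) < r) := by
  have h := key_lt π ((Tuple.sort (chi r s π))⁻¹ x)
  rw [Equiv.Perm.apply_inv_self] at h
  unfold stdSh
  exact h

lemma isShuffle_stdSh (π : Equiv.Perm (Fin (r+s))) : IsShuffle r s (stdSh r s π) := by
  have hsort := (Tuple.eq_sort_iff (f := chi r s π) (σ := Tuple.sort (chi r s π))).mp rfl
  have hsymm : (stdSh r s π).symm = Tuple.sort (chi r s π) := rfl
  constructor
  · intro a b ha hb hab
    rw [hsymm]
    refine hsort.2 a b hab ?_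
    have h1 : chi r s π (Tuple.sort (chi r s π) a) = 0 := by
      rw [chi_apply, if_pos ((key_lt π a).mp ha)]
    have h2 : chi r s π (Tuple.sort (chi r s π) b) = 0 := by
      rw [chi_apply, if_pos ((key_lt π b).mp hb)]
    rw [h1, h2]
  · intro a b ha hb hab
    rw [hsymm]
    refine hsort.2 a b hab ?_
    have h1 : chi r s π (Tuple.sort (chi r s π) a) = 1 := by
      rw [chi_apply, if_neg (fun hc => absurd ((key_lt π a).mpr hc) (not_lt.mpr ha))]
    have h2 : chi r s π (Tuple.sort (chi r s π) b) = 1 := by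
      rw [chi_apply, if_neg (fun hc => absurd ((key_lt π b).mpr hc) (not_lt.mpr hb))]
    rw [h1, h2]

lemma stdSh_unique (e π : Equiv.Perm (Fin (r+s))) (he : IsShuffle r s e)
    (hind : ∀ x, ((e x : ℕ) < r ↔ (π x : ℕ) < r)) : stdSh r s π = e := by
  have hval : ∀ i : Fin (r+s), chi r s π (e.symm i) = if (i : ℕ) < r then 0 else 1 := by
    intro i
    rw [chi_apply]
    have hiff : ((π (e.symm i) : ℕ) < r) ↔ ((i : ℕ) < r) := by
      rw [← hind (e.symm i), Equiv.apply_symm_apply]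
    by_cases h : (i : ℕ) < r
    · rw [if_pos (hiff.mpr h), if_pos h]
    · rw [if_neg (fun hc => h (hiff.mp hc)), if_neg h]
  have hes : e.symm = Tuple.sort (chi r s π) := by
    rw [Tuple.eq_sort_iff]
    constructor
    · intro i j hij
      simp only [Function.comp_apply]
      rw [hval i, hval j]
      by_cases hi : (i : ℕ) < r <;> by_cases hj : (j : ℕ) < r
      · simp [hi, hj]
      · simp [hi, hj]
      · exact absurd (lt_of_le_of_lt (show (i : ℕ) ≤ (j : ℕ) from hij) hj) hi
      · simp [hi, hj]
    · intro i j hij heq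
      rw [hval i, hval j] at heq
      by_cases hi : (i : ℕ) < r <;> by_cases hj : (j : ℕ) < r
      · exact he.1 i j hi hj hij
      · simp [hi, hj] at heq
      · simp [hi, hj] at heq
      · exact he.2 i j (not_lt.mp hi) (not_lt.mp hj) hij
  unfold stdSh
  rw [← hes]
  ext x
  rfl
end Aux2
section Aux3
open Equiv Finset

variable {n r s : ℕ}

/-- The sorted merge of two tuples. -/
def hMerge (f : Fin r → Fin n) (g : Fin s → Fin n) : Fin (r+s) → Fin n :=
  Fin.append f g ∘ Tuple.sort (Fin.append f g)

lemma hMerge_monotone (f : Fin r → Fin n) (g : Fin s → Fin n) : Monotone (hMerge f g) :=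
  Tuple.monotone_sort _

lemma stdSh_fiber (f : Fin r → Fin n) (g : Fin s → Fin n) (hf : Monotone f) (hg : Monotone g)
    (π : Equiv.Perm (Fin (r+s)))
    (hπ : ∀ j, hMerge f g (π⁻¹ j) = Fin.append f g j) :
    ∀ j, hMerge f g ((stdSh r s π)⁻¹ j) = Fin.append f g j := by
  intro j
  set τ := Tuple.sort (chi r s π) with hτ
  have hinv : (stdSh r s π)⁻¹ = τ := by unfold stdSh; rw [inv_inv]
  have hkey : ∀ x : Fin (r+s), ((x:ℕ) < r ↔ (π (τ x) : ℕ) < r) := fun x => key_lt π x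
  have hsort := (Tuple.eq_sort_iff (f := chi r s π) (σ := τ)).mp hτ
  have h0mono : Monotone (hMerge f g) := Tuple.monotone_sort _
  rw [hinv]
  by_cases hj : (j : ℕ) < r
  · -- first block
    have main : ∀ i : Fin r, hMerge f g (τ (Fin.castAdd s i)) = f i := by
      have hclt : ∀ i : Fin r, (π (τ (Fin.castAdd s i)) : ℕ) < r := by
        intro i
        exact (hkey _).mp (by simpa using i.2)
      set c : Fin r → Fin r := fun i => Fin.castLT (π (τ (Fin.castAdd s i))) (hclt i) with hc
      have hcast : ∀ i, Fin.castAdd s (c i) = π (τ (Fin.castAdd s i)) := by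
        intro i; ext; simp [hc]
      have hcinj : Function.Injective c := by
        intro i i' h
        have h2 : π (τ (Fin.castAdd s i)) = π (τ (Fin.castAdd s i')) := by
          rw [← hcast, ← hcast, h]
        have h3 := τ.injective (π.injective h2)
        have h4 : (i:ℕ) = (i':ℕ) := congrArg (fun x : Fin (r+s) => (x:ℕ)) h3
        exact Fin.ext h4
      have hu : ∀ i, hMerge f g (τ (Fin.castAdd s i)) = f (c i) := by
        intro i
        have h1 : hMerge f g (π⁻¹ (π (τ (Fin.castAdd s i))))
            = Fin.append f g (π (τ (Fin.castAdd s i))) := hπ _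
        rw [Equiv.Perm.inv_apply_self] at h1
        rw [h1, ← hcast, Fin.append_left]
      have hcb := Finite.injective_iff_bijective.mp hcinj
      set cperm : Equiv.Perm (Fin r) := Equiv.ofBijective c hcb with hcperm
      have humono : Monotone (f ∘ cperm) := by
        have heq : (f ∘ cperm) = fun i => hMerge f g (τ (Fin.castAdd s i)) := by
          funext i
          simp only [Function.comp_apply, hcperm, Equiv.ofBijective_apply]
          rw [← hu]
        rw [heq]
        intro i i' hii
        rcases eq_or_lt_of_le hii with h | h
        · rw [h]
        · apply h0mono
          apply le_of_lt
          apply hsort.2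
          · rw [Fin.lt_def]
            show (i:ℕ) < (i':ℕ)
            exact h
          · rw [chi_apply, chi_apply, if_pos (hclt i), if_pos (hclt i')]
      have huniq := Tuple.unique_monotone (f := f) (σ := cperm) (τ := Equiv.refl _)
        humono (by simpa using hf)
      intro i
      rw [hu i]
      have := congrFun huniq i
      simpa [hcperm] using this
    have hj' : j = Fin.castAdd s ⟨(j:ℕ), hj⟩ := by ext; rfl
    rw [hj', main, Fin.append_left]
  · -- second block
    have hjr : r ≤ (j : ℕ) := not_lt.mp hj
    have hcge : ∀ i : Fin s, ¬ ((π (τ (Fin.natAdd r i)) : ℕ) < r) := by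
      intro i hc
      have h1 := (hkey (Fin.natAdd r i)).mpr hc
      have h2 : ((Fin.natAdd r i : Fin (r+s)) : ℕ) = r + (i:ℕ) := rfl
      omega
    set c : Fin s → Fin s := fun i => ⟨(π (τ (Fin.natAdd r i)) : ℕ) - r, by
      have h1 := (π (τ (Fin.natAdd r i))).2
      have h2 := hcge i
      omega⟩ with hc
    have hcast : ∀ i, Fin.natAdd r (c i) = π (τ (Fin.natAdd r i)) := by
      intro i
      have h2 := hcge i
      apply Fin.ext
      show r + ((π (τ (Fin.natAdd r i)) : ℕ) - r) = (π (τ (Fin.natAdd r i)) : ℕ)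
      omega
    have hcinj : Function.Injective c := by
      intro i i' h
      have h2 : π (τ (Fin.natAdd r i)) = π (τ (Fin.natAdd r i')) := by
        rw [← hcast, ← hcast, h]
      have h3 := τ.injective (π.injective h2)
      have h4 : r + (i:ℕ) = r + (i':ℕ) := congrArg (fun x : Fin (r+s) => (x:ℕ)) h3
      have h5 : (i:ℕ) = (i':ℕ) := by omega
      exact Fin.ext h5
    have hu : ∀ i, hMerge f g (τ (Fin.natAdd r i)) = g (c i) := by
      intro i
      have h1 : hMerge f g (π⁻¹ (π (τ (Fin.natAdd r i))))
          = Fin.append f g (π (τ (Fin.natAdd r i))) := hπ _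
      rw [Equiv.Perm.inv_apply_self] at h1
      rw [h1, ← hcast, Fin.append_right]
    have hcb := Finite.injective_iff_bijective.mp hcinj
    set cperm : Equiv.Perm (Fin s) := Equiv.ofBijective c hcb with hcperm
    have humono : Monotone (g ∘ cperm) := by
      have heq : (g ∘ cperm) = fun i => hMerge f g (τ (Fin.natAdd r i)) := by
        funext i
        simp only [Function.comp_apply, hcperm, Equiv.ofBijective_apply]
        rw [← hu]
      rw [heq]
      intro i i' hii
      rcases eq_or_lt_of_le hii with h | h
      · rw [h]
      · apply h0mono
        apply le_of_lt
        apply hsort.2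
        · rw [Fin.lt_def]
          show r + (i:ℕ) < r + (i':ℕ)
          have hh : (i:ℕ) < (i':ℕ) := h
          omega
        · rw [chi_apply, chi_apply, if_neg (hcge i), if_neg (hcge i')]
    have huniq := Tuple.unique_monotone (f := g) (σ := cperm) (τ := Equiv.refl _)
      humono (by simpa using hg)
    have main : ∀ i : Fin s, hMerge f g (τ (Fin.natAdd r i)) = g i := by
      intro i
      rw [hu i]
      have := congrFun huniq i
      simpa [hcperm] using this
    have hjlt : (j:ℕ) - r < s := by have := j.2; omega
    have hj' : j = Fin.natAdd r ⟨(j:ℕ) - r, hjlt⟩ := by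
      apply Fin.ext
      show (j:ℕ) = r + ((j:ℕ) - r)
      omega
    rw [hj', main, Fin.append_right]
end Aux3
section Aux4
open Equiv Finset

variable {n r s : ℕ}

lemma castAdd_eq_of_lt {x : Fin (r+s)} (hx : (x : ℕ) < r) :
    x = Fin.castAdd s ⟨(x : ℕ), hx⟩ := by
  apply Fin.ext; rfl

lemma natAdd_eq_of_ge {x : Fin (r+s)} (hx : ¬ ((x : ℕ) < r)) :
    x = Fin.natAdd r ⟨(x : ℕ) - r, by have := x.2; omega⟩ := by
  apply Fin.ext
  show (x : ℕ) = r + ((x : ℕ) - r)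
  omega

lemma blk_castAdd (ρ₁ : Equiv.Perm (Fin r)) (ρ₂ : Equiv.Perm (Fin s)) (i : Fin r) :
    (finSumFinEquiv.permCongr (ρ₁.sumCongr ρ₂)) (Fin.castAdd s i) = Fin.castAdd s (ρ₁ i) := by
  simp [Equiv.permCongr_apply]

lemma blk_natAdd (ρ₁ : Equiv.Perm (Fin r)) (ρ₂ : Equiv.Perm (Fin s)) (i : Fin s) :
    (finSumFinEquiv.permCongr (ρ₁.sumCongr ρ₂)) (Fin.natAdd r i) = Fin.natAdd r (ρ₂ i) := by
  simp [Equiv.permCongr_apply]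

lemma cardP (f : Fin r → Fin n) (g : Fin s → Fin n) :
    (Finset.univ.filter (fun π : Equiv.Perm (Fin (r+s)) =>
        ∀ j, hMerge f g (π⁻¹ j) = Fin.append f g j)).card
      = volFin (fun i => (hMerge f g i : ℕ)) := by
  rw [volFin_coe_eq (hMerge f g), Fintype.card_subtype]
  set π₀ : Equiv.Perm (Fin (r+s)) := Tuple.sort (Fin.append f g) with hπ₀
  have hp0 : ∀ y, hMerge f g (π₀⁻¹ y) = Fin.append f g y := by
    intro y
    show Fin.append f g (π₀ (π₀⁻¹ y)) = Fin.append f g y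
    rw [Equiv.Perm.apply_inv_self]
  apply Finset.card_bij' (fun π _ => π₀⁻¹ * π) (fun ρ _ => π₀ * ρ)
  · intro π hπ
    rw [Finset.mem_filter] at hπ ⊢
    refine ⟨Finset.mem_univ _, ?_⟩
    funext x
    show hMerge f g (π₀⁻¹ (π x)) = hMerge f g x
    rw [hp0]
    have h2 := hπ.2 (π x)
    rw [Equiv.Perm.inv_apply_self] at h2
    exact h2.symm
  · intro ρ hρ
    rw [Finset.mem_filter] at hρ ⊢
    refine ⟨Finset.mem_univ _, ?_⟩
    intro j
    show hMerge f g (ρ⁻¹ (π₀⁻¹ j)) = Fin.append f g j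
    have hst : ∀ y, hMerge f g (ρ⁻¹ y) = hMerge f g y := by
      intro y
      have h3 := congrFun hρ.2 (ρ⁻¹ y)
      simpa [Equiv.Perm.apply_inv_self] using h3.symm
    rw [hst, hp0]
  · intro π _; group
  · intro ρ _; group

lemma cardBS (f : Fin r → Fin n) (g : Fin s → Fin n) :
    (Finset.univ.filter (fun ρ : Equiv.Perm (Fin (r+s)) =>
        (∀ x, ((ρ x : ℕ) < r ↔ (x : ℕ) < r)) ∧ Fin.append f g ∘ ρ = Fin.append f g)).card
      = volFin (fun i => (f i : ℕ)) * volFin (fun i => (g i : ℕ)) := by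
  rw [volFin_coe_eq f, volFin_coe_eq g, ← Fintype.card_prod, ← Fintype.card_subtype]
  symm
  apply Fintype.card_congr
  refine Equiv.ofBijective (fun p =>
    ⟨finSumFinEquiv.permCongr (p.1.1.sumCongr p.2.1), ?_, ?_⟩) ⟨?_, ?_⟩
  · -- block condition
    intro x
    by_cases hx : (x : ℕ) < r
    · rw [castAdd_eq_of_lt hx, blk_castAdd]
      simp [hx]
    · rw [natAdd_eq_of_ge hx]
      rw [blk_natAdd]
      constructor
      · intro hc
        exact absurd hc (by simp [Fin.natAdd])
      · intro hc
        exact absurd hc (by simp [Fin.natAdd])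
  · -- F ∘ blk = F
    funext x
    by_cases hx : (x : ℕ) < r
    · rw [castAdd_eq_of_lt hx]
      show Fin.append f g ((finSumFinEquiv.permCongr (p.1.1.sumCongr p.2.1))
        (Fin.castAdd s ⟨(x:ℕ), hx⟩)) = _
      rw [blk_castAdd, Fin.append_left, Fin.append_left]
      exact congrFun p.1.2 _
    · rw [natAdd_eq_of_ge hx]
      show Fin.append f g ((finSumFinEquiv.permCongr (p.1.1.sumCongr p.2.1))
        (Fin.natAdd r _)) = _
      rw [blk_natAdd, Fin.append_right, Fin.append_right]
      exact congrFun p.2.2 _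
  · -- injective
    intro p p' hpp
    have h1 : finSumFinEquiv.permCongr ((p.1.1).sumCongr (p.2.1))
        = finSumFinEquiv.permCongr ((p'.1.1).sumCongr (p'.2.1)) := congrArg Subtype.val hpp
    apply Prod.ext
    · apply Subtype.ext
      apply Equiv.ext
      intro i
      have h2 := DFunLike.congr_fun h1 (Fin.castAdd s i)
      rw [blk_castAdd, blk_castAdd] at h2
      exact Fin.ext (congrArg (fun x : Fin (r+s) => (x : ℕ)) h2)
    · apply Subtype.ext
      apply Equiv.ext
      intro i
      have h2 := DFunLike.congr_fun h1 (Fin.natAdd r i)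
      rw [blk_natAdd, blk_natAdd] at h2
      have h3 : r + ((p.2.1) i : ℕ) = r + ((p'.2.1) i : ℕ) :=
        congrArg (fun x : Fin (r+s) => (x : ℕ)) h2
      exact Fin.ext (by omega)
  · -- surjective
    rintro ⟨ρ, hb, hF⟩
    have hc1lt : ∀ i : Fin r, (ρ (Fin.castAdd s i) : ℕ) < r := by
      intro i
      exact (hb _).mpr (by simpa using i.2)
    set c₁ : Fin r → Fin r := fun i => Fin.castLT (ρ (Fin.castAdd s i)) (hc1lt i) with hc₁
    have hcast₁ : ∀ i, Fin.castAdd s (c₁ i) = ρ (Fin.castAdd s i) := by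
      intro i; apply Fin.ext; rfl
    have hinj₁ : Function.Injective c₁ := by
      intro i i' h
      have h2 : ρ (Fin.castAdd s i) = ρ (Fin.castAdd s i') := by
        rw [← hcast₁, ← hcast₁, h]
      have h3 := ρ.injective h2
      exact Fin.ext (congrArg (fun x : Fin (r+s) => (x:ℕ)) h3)
    have hge : ∀ i : Fin s, ¬ ((ρ (Fin.natAdd r i) : ℕ) < r) := by
      intro i hcon
      have := (hb _).mp hcon
      have h2 : ((Fin.natAdd r i : Fin (r+s)) : ℕ) = r + (i : ℕ) := rfl
      omega
    set c₂ : Fin s → Fin s := fun i => ⟨(ρ (Fin.natAdd r i) : ℕ) - r, by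
      have := (ρ (Fin.natAdd r i)).2
      have := hge i
      omega⟩ with hc₂
    have hcast₂ : ∀ i, Fin.natAdd r (c₂ i) = ρ (Fin.natAdd r i) := by
      intro i
      have := hge i
      apply Fin.ext
      show r + ((ρ (Fin.natAdd r i) : ℕ) - r) = _
      omega
    have hinj₂ : Function.Injective c₂ := by
      intro i i' h
      have h2 : ρ (Fin.natAdd r i) = ρ (Fin.natAdd r i') := by
        rw [← hcast₂, ← hcast₂, h]
      have h3 := ρ.injective h2
      have h4 : r + (i : ℕ) = r + (i' : ℕ) := congrArg (fun x : Fin (r+s) => (x:ℕ)) h3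
      exact Fin.ext (by omega)
    set e₁ : Equiv.Perm (Fin r) := Equiv.ofBijective c₁ (Finite.injective_iff_bijective.mp hinj₁)
    set e₂ : Equiv.Perm (Fin s) := Equiv.ofBijective c₂ (Finite.injective_iff_bijective.mp hinj₂)
    have hstab₁ : f ∘ e₁ = f := by
      funext i
      show f (c₁ i) = f i
      have h1 : f (c₁ i) = Fin.append f g (Fin.castAdd s (c₁ i)) := (Fin.append_left f g _).symm
      rw [h1, hcast₁]
      have h2 := congrFun hF (Fin.castAdd s i)
      simp only [Function.comp_apply] at h2
      rw [h2, Fin.append_left]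
    have hstab₂ : g ∘ e₂ = g := by
      funext i
      show g (c₂ i) = g i
      have h1 : g (c₂ i) = Fin.append f g (Fin.natAdd r (c₂ i)) := (Fin.append_right f g _).symm
      rw [h1, hcast₂]
      have h2 := congrFun hF (Fin.natAdd r i)
      simp only [Function.comp_apply] at h2
      rw [h2, Fin.append_right]
    refine ⟨⟨⟨e₁, hstab₁⟩, ⟨e₂, hstab₂⟩⟩, ?_⟩
    apply Subtype.ext
    apply Equiv.ext
    intro x
    by_cases hx : (x : ℕ) < r
    · rw [castAdd_eq_of_lt hx]
      show (finSumFinEquiv.permCongr (e₁.sumCongr e₂)) (Fin.castAdd s ⟨(x:ℕ), hx⟩) = _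
      rw [blk_castAdd]
      show Fin.castAdd s (c₁ _) = _
      rw [hcast₁]
    · rw [natAdd_eq_of_ge hx]
      show (finSumFinEquiv.permCongr (e₁.sumCongr e₂)) (Fin.natAdd r _) = _
      rw [blk_natAdd]
      show Fin.natAdd r (c₂ _) = _
      rw [hcast₂]
end Aux4
section Aux5
open Equiv Finset

variable {n r s : ℕ}

lemma cardP_eq (f : Fin r → Fin n) (g : Fin s → Fin n) (hf : Monotone f) (hg : Monotone g) :
    (Finset.univ.filter (fun π : Equiv.Perm (Fin (r+s)) =>
        ∀ j, hMerge f g (π⁻¹ j) = Fin.append f g j)).card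
    = (Finset.univ.filter (fun e : Equiv.Perm (Fin (r+s)) =>
        IsShuffle r s e ∧ ∀ j, hMerge f g (e⁻¹ j) = Fin.append f g j)).card
      * (Finset.univ.filter (fun ρ : Equiv.Perm (Fin (r+s)) =>
        (∀ x, ((ρ x : ℕ) < r ↔ (x : ℕ) < r)) ∧ Fin.append f g ∘ ρ = Fin.append f g)).card := by
  rw [← Finset.card_product]
  symm
  apply Finset.card_bij' (i := fun p _ => p.2⁻¹ * p.1)
    (j := fun π _ => (stdSh r s π, stdSh r s π * π⁻¹))
  · rintro ⟨e, ρ⟩ hp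
    rw [Finset.mem_product, Finset.mem_filter, Finset.mem_filter] at hp
    obtain ⟨⟨-, he1, he2⟩, -, hρ1, hρ2⟩ := hp
    rw [Finset.mem_filter]
    refine ⟨Finset.mem_univ _, fun j => ?_⟩
    show hMerge f g ((ρ⁻¹ * e)⁻¹ j) = _
    have hj : (ρ⁻¹ * e)⁻¹ j = e⁻¹ (ρ j) := by
      rw [mul_inv_rev, inv_inv]; rfl
    rw [hj, he2 (ρ j)]
    exact congrFun hρ2 j
  · intro π hπ
    rw [Finset.mem_filter] at hπ
    obtain ⟨-, hπ2⟩ := hπ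
    rw [Finset.mem_product, Finset.mem_filter, Finset.mem_filter]
    refine ⟨⟨Finset.mem_univ _, isShuffle_stdSh π, stdSh_fiber f g hf hg π hπ2⟩,
      Finset.mem_univ _, ?_, ?_⟩
    · intro x
      have h1 := stdSh_lt_iff π (π⁻¹ x)
      rw [Equiv.Perm.apply_inv_self] at h1
      exact h1
    · funext x
      show Fin.append f g (stdSh r s π (π⁻¹ x)) = Fin.append f g x
      have h2 := stdSh_fiber f g hf hg π hπ2 (stdSh r s π (π⁻¹ x))
      rw [Equiv.Perm.inv_apply_self] at h2
      rw [← h2, hπ2 x]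
  · rintro ⟨e, ρ⟩ hp
    rw [Finset.mem_product, Finset.mem_filter, Finset.mem_filter] at hp
    obtain ⟨⟨-, he1, he2⟩, -, hρ1, hρ2⟩ := hp
    have hstd : stdSh r s (ρ⁻¹ * e) = e := by
      apply stdSh_unique e (ρ⁻¹ * e) he1
      intro x
      show ((e x : ℕ) < r ↔ (ρ⁻¹ (e x) : ℕ) < r)
      have := hρ1 (ρ⁻¹ (e x))
      rw [Equiv.Perm.apply_inv_self] at this
      exact this
    rw [Prod.ext_iff]
    constructor
    · exact hstd
    · show stdSh r s (ρ⁻¹ * e) * (ρ⁻¹ * e)⁻¹ = ρ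
      rw [hstd]
      group
  · intro π _
    show (stdSh r s π * π⁻¹)⁻¹ * stdSh r s π = π
    group

lemma cardCORE (f : Fin r → Fin n) (g : Fin s → Fin n) (hf : Monotone f) (hg : Monotone g) :
    (Finset.univ.filter (fun e : Equiv.Perm (Fin (r+s)) =>
        IsShuffle r s e ∧ ∀ j, hMerge f g (e⁻¹ j) = Fin.append f g j)).card
      * (volFin (fun i => (f i : ℕ)) * volFin (fun i => (g i : ℕ)))
    = volFin (fun i => (hMerge f g i : ℕ)) := by
  rw [← cardBS f g]
  rw [← cardP_eq f g hf hg, cardP f g]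

end Aux5
section Aux6
open Equiv Finset

variable {n r s : ℕ}

lemma fiber_h_eq {f : Fin r → Fin n} {g : Fin s → Fin n} {e : Equiv.Perm (Fin (r+s))}
    {h : Fin (r+s) → Fin n} (hh : Monotone h)
    (hfib : ∀ j, h (e.symm j) = Fin.append f g j) : h = hMerge f g := by
  have h1 : h = Fin.append f g ∘ ⇑e := by
    funext x
    have h2 := hfib (e x)
    rw [Equiv.symm_apply_apply] at h2
    exact h2
  have h2 := Tuple.unique_monotone (f := Fin.append f g) (σ := e)
    (τ := Tuple.sort (Fin.append f g)) (by rw [← h1]; exact hh) (Tuple.monotone_sort _)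
  rw [h1]
  exact h2

lemma phi_mono₁ {e : Equiv.Perm (Fin (r+s))} (he : IsShuffle r s e)
    {h : Fin (r+s) → Fin n} (hh : Monotone h) :
    Monotone (fun i : Fin r => h (e.symm (Fin.castAdd s i))) := by
  intro i i' hii
  rcases eq_or_lt_of_le hii with rfl | hlt
  · exact le_refl _
  · refine hh (le_of_lt (he.1 _ _ ?_ ?_ ?_))
    · simpa using i.2
    · simpa using i'.2
    · rw [Fin.lt_def]
      show (i : ℕ) < (i' : ℕ)
      exact hlt
lemma phi_mono₂ {e : Equiv.Perm (Fin (r+s))} (he : IsShuffle r s e)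
    {h : Fin (r+s) → Fin n} (hh : Monotone h) :
    Monotone (fun i : Fin s => h (e.symm (Fin.natAdd r i))) := by
  intro i i' hii
  rcases eq_or_lt_of_le hii with rfl | hlt
  · exact le_refl _
  · refine hh (le_of_lt (he.2 _ _ ?_ ?_ ?_))
    · show r ≤ r + (i : ℕ); omega
    · show r ≤ r + (i' : ℕ); omega
    · rw [Fin.lt_def]
      show r + (i : ℕ) < r + (i' : ℕ)
      have : (i : ℕ) < (i' : ℕ) := hlt
      omega

lemma fiber_unpack {f : Fin r → Fin n} {g : Fin s → Fin n}
    {p : Equiv.Perm (Fin (r+s)) × (Fin (r+s) → Fin n)}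
    (hp : p ∈ ((Finset.univ.filter (fun e : Equiv.Perm (Fin (r+s)) => IsShuffle r s e)) ×ˢ
        (Finset.univ.filter (fun h : Fin (r+s) → Fin n => Monotone h))).filter
      (fun p => ((fun i => p.2 (p.1.symm (Fin.castAdd s i))),
        (fun i => p.2 (p.1.symm (Fin.natAdd r i)))) = (f, g))) :
    IsShuffle r s p.1 ∧ Monotone p.2 ∧ (∀ j, p.2 (p.1.symm j) = Fin.append f g j)
      ∧ p.2 = hMerge f g := by
  rw [Finset.mem_filter, Finset.mem_product, Finset.mem_filter, Finset.mem_filter] at hp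
  obtain ⟨⟨⟨-, he⟩, -, hh⟩, hΦ⟩ := hp
  have h1 : (fun i => p.2 (p.1.symm (Fin.castAdd s i))) = f := congrArg Prod.fst hΦ
  have h2 : (fun i => p.2 (p.1.symm (Fin.natAdd r i))) = g := congrArg Prod.snd hΦ
  have hfib : ∀ j, p.2 (p.1.symm j) = Fin.append f g j := by
    intro j
    by_cases hj : (j : ℕ) < r
    · rw [castAdd_eq_of_lt hj, Fin.append_left]
      exact congrFun h1 _
    · rw [natAdd_eq_of_ge hj, Fin.append_right]
      exact congrFun h2 _
  exact ⟨he, hh, hfib, fiber_h_eq hh hfib⟩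

lemma fiberCard (f : Fin r → Fin n) (g : Fin s → Fin n) :
    (((Finset.univ.filter (fun e : Equiv.Perm (Fin (r+s)) => IsShuffle r s e)) ×ˢ
        (Finset.univ.filter (fun h : Fin (r+s) → Fin n => Monotone h))).filter
      (fun p => ((fun i => p.2 (p.1.symm (Fin.castAdd s i))),
        (fun i => p.2 (p.1.symm (Fin.natAdd r i)))) = (f, g))).card
    = (Finset.univ.filter (fun e : Equiv.Perm (Fin (r+s)) =>
        IsShuffle r s e ∧ ∀ j, hMerge f g (e⁻¹ j) = Fin.append f g j)).card := by
  refine Finset.card_bij' (fun p _ => p.1) (fun e _ => (e, hMerge f g)) ?_ ?_ ?_ ?_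
  · intro p hp
    obtain ⟨he, hh, hfib, hhm⟩ := fiber_unpack hp
    rw [Finset.mem_filter]
    refine ⟨Finset.mem_univ _, he, fun j => ?_⟩
    show hMerge f g (p.1.symm j) = _
    rw [← hhm]
    exact hfib j
  · intro e hee
    rw [Finset.mem_filter] at hee
    obtain ⟨-, he, hfib⟩ := hee
    rw [Finset.mem_filter, Finset.mem_product, Finset.mem_filter, Finset.mem_filter]
    refine ⟨⟨⟨Finset.mem_univ _, he⟩, Finset.mem_univ _, hMerge_monotone f g⟩, ?_⟩
    rw [Prod.mk.injEq]
    constructor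
    · funext i
      have := hfib (Fin.castAdd s i)
      rw [Fin.append_left] at this
      exact this
    · funext i
      have := hfib (Fin.natAdd r i)
      rw [Fin.append_right] at this
      exact this
  · intro p hp
    obtain ⟨-, -, -, hhm⟩ := fiber_unpack hp
    exact Prod.ext rfl hhm.symm
  · intro e _
    rfl
end Aux6
section Aux7
open Equiv Finset

lemma fiberSum (K : Type*) [Field K] [CharZero K] {V : Type*} (σ : ℕ → PStep V)
    {n r s : ℕ} (ω : Fin (r+s) → V → V → K)
    (f : Fin r → Fin n) (g : Fin s → Fin n) (hf : Monotone f) (hg : Monotone g) :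
    ∑ p ∈ ((Finset.univ.filter (fun e : Equiv.Perm (Fin (r+s)) => IsShuffle r s e)) ×ˢ
        (Finset.univ.filter (fun h : Fin (r+s) → Fin n => Monotone h))).filter
      (fun p => ((fun i => p.2 (p.1.symm (Fin.castAdd s i))),
        (fun i => p.2 (p.1.symm (Fin.natAdd r i)))) = (f, g)),
      (∏ i, PStep.pair (ω (p.1 i)) (σ ((p.2 i : ℕ) + 1))) / (volFin (fun i => (p.2 i : ℕ)) : K)
    = ((∏ i, PStep.pair (ω (Fin.castAdd s i)) (σ ((f i : ℕ) + 1)))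
        / (volFin (fun i => (f i : ℕ)) : K))
      * ((∏ i, PStep.pair (ω (Fin.natAdd r i)) (σ ((g i : ℕ) + 1)))
        / (volFin (fun i => (g i : ℕ)) : K)) := by
  have hterm : ∀ p ∈ ((Finset.univ.filter (fun e : Equiv.Perm (Fin (r+s)) => IsShuffle r s e)) ×ˢ
        (Finset.univ.filter (fun h : Fin (r+s) → Fin n => Monotone h))).filter
      (fun p => ((fun i => p.2 (p.1.symm (Fin.castAdd s i))),
        (fun i => p.2 (p.1.symm (Fin.natAdd r i)))) = (f, g)),
      (∏ i, PStep.pair (ω (p.1 i)) (σ ((p.2 i : ℕ) + 1))) / (volFin (fun i => (p.2 i : ℕ)) : K)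
      = ((∏ i : Fin r, PStep.pair (ω (Fin.castAdd s i)) (σ ((f i : ℕ) + 1)))
          * ∏ i : Fin s, PStep.pair (ω (Fin.natAdd r i)) (σ ((g i : ℕ) + 1)))
        / (volFin (fun i => (hMerge f g i : ℕ)) : K) := by
    intro p hp
    obtain ⟨he, hh, hfib, hhm⟩ := fiber_unpack hp
    have hnum : (∏ i, PStep.pair (ω (p.1 i)) (σ ((p.2 i : ℕ) + 1)))
        = (∏ i : Fin r, PStep.pair (ω (Fin.castAdd s i)) (σ ((f i : ℕ) + 1)))
          * ∏ i : Fin s, PStep.pair (ω (Fin.natAdd r i)) (σ ((g i : ℕ) + 1)) := by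
      have h1 : ∀ i, PStep.pair (ω (p.1 i)) (σ ((p.2 i : ℕ) + 1))
          = (fun j => PStep.pair (ω j) (σ (((Fin.append f g j : Fin n) : ℕ) + 1))) (p.1 i) := by
        intro i
        have h2 := hfib (p.1 i)
        rw [Equiv.symm_apply_apply] at h2
        show PStep.pair (ω (p.1 i)) (σ ((p.2 i : ℕ) + 1))
          = PStep.pair (ω (p.1 i)) (σ (((Fin.append f g (p.1 i) : Fin n) : ℕ) + 1))
        rw [h2]
      rw [Finset.prod_congr rfl (fun i _ => h1 i),
        Equiv.prod_comp p.1
          (fun j => PStep.pair (ω j) (σ (((Fin.append f g j : Fin n) : ℕ) + 1))),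
        Fin.prod_univ_add]
      simp only [Fin.append_left, Fin.append_right]
    rw [hnum, hhm]
  rw [Finset.sum_congr rfl hterm, Finset.sum_const, fiberCard f g, nsmul_eq_mul]
  have hcore := cardCORE f g hf hg
  set c : ℕ := (Finset.univ.filter (fun e : Equiv.Perm (Fin (r+s)) =>
      IsShuffle r s e ∧ ∀ j, hMerge f g (e⁻¹ j) = Fin.append f g j)).card with hcdef
  have hvf : ((volFin (fun i => (f i : ℕ)) : K)) ≠ 0 :=
    Nat.cast_ne_zero.mpr (volFin_ne_zero _)
  have hvg : ((volFin (fun i => (g i : ℕ)) : K)) ≠ 0 :=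
    Nat.cast_ne_zero.mpr (volFin_ne_zero _)
  have hvh : ((volFin (fun i => (hMerge f g i : ℕ)) : K)) ≠ 0 :=
    Nat.cast_ne_zero.mpr (volFin_ne_zero _)
  have hv : ((volFin (fun i => (hMerge f g i : ℕ)) : K))
      = (c : K) * ((volFin (fun i => (f i : ℕ)) : K) * (volFin (fun i => (g i : ℕ)) : K)) := by
    rw [← hcore]
    push_cast
    ring
  have hc : (c : K) ≠ 0 := by
    intro h0
    rw [h0, zero_mul] at hv
    exact hvh hv
  rw [div_mul_div_comm, hv, ← mul_div_assoc, mul_div_mul_left _ _ hc]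
end Aux7
/-- Shuffle product formula:
`(∫_α ω_1⋯ω_r)(∫_α ω_{r+1}⋯ω_{r+s}) = Σ_{(r,s)-shuffles σ} ∫_α ω_{σ(1)}⋯ω_{σ(r+s)}`. -/
theorem stmt8 {V : Type*} (K : Type*) [Field K] [CharZero K] (G : Digraph' V)
    (n : ℕ) (σ : ℕ → PStep V) (h : IsPathMap G n σ)
    (r s : ℕ) (ω : Fin (r + s) → V → V → K) :
    iint K n σ r (fun i => ω (Fin.castAdd s i)) *
      iint K n σ s (fun i => ω (Fin.natAdd r i)) =
    ∑ e ∈ Finset.univ.filter (fun e : Equiv.Perm (Fin (r + s)) =>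
        (∀ a b : Fin (r + s), (a : ℕ) < r → (b : ℕ) < r → a < b → e.symm a < e.symm b) ∧
        (∀ a b : Fin (r + s), r ≤ (a : ℕ) → r ≤ (b : ℕ) → a < b → e.symm a < e.symm b)),
      iint K n σ (r + s) (fun i => ω (e i)) := by
  have hShEq : (Finset.univ.filter (fun e : Equiv.Perm (Fin (r + s)) =>
      (∀ a b : Fin (r + s), (a : ℕ) < r → (b : ℕ) < r → a < b → e.symm a < e.symm b) ∧
      (∀ a b : Fin (r + s), r ≤ (a : ℕ) → r ≤ (b : ℕ) → a < b → e.symm a < e.symm b)))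
      = Finset.univ.filter (fun e : Equiv.Perm (Fin (r + s)) => IsShuffle r s e) :=
    Finset.filter_congr (fun e _ => Iff.rfl)
  rw [hShEq]
  unfold iint
  rw [Finset.sum_mul_sum]
  rw [← Finset.sum_product']
  conv_rhs => rw [← Finset.sum_product']
  have hmaps : ∀ p ∈ (Finset.univ.filter (fun e : Equiv.Perm (Fin (r+s)) => IsShuffle r s e)) ×ˢ
      (Finset.univ.filter (fun h : Fin (r+s) → Fin n => Monotone h)),
      ((fun i => p.2 (p.1.symm (Fin.castAdd s i))), (fun i => p.2 (p.1.symm (Fin.natAdd r i))))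
        ∈ (Finset.univ.filter (fun f : Fin r → Fin n => Monotone f)) ×ˢ
          (Finset.univ.filter (fun g : Fin s → Fin n => Monotone g)) := by
    intro p hp
    rw [Finset.mem_product, Finset.mem_filter, Finset.mem_filter] at hp
    rw [Finset.mem_product, Finset.mem_filter, Finset.mem_filter]
    exact ⟨⟨Finset.mem_univ _, phi_mono₁ hp.1.2 hp.2.2⟩,
      Finset.mem_univ _, phi_mono₂ hp.1.2 hp.2.2⟩
  rw [← Finset.sum_fiberwise_of_maps_to hmaps _]
  refine Finset.sum_congr rfl ?_
  rintro ⟨f, g⟩ hy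
  rw [Finset.mem_product, Finset.mem_filter, Finset.mem_filter] at hy
  exact (fiberSum K σ ω f g hy.1.2 hy.2.2).symm
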